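/- Let p > 3 be prime and δ ∈ ℤ/pℤ with δ² + δ + 1 = 0. Set u = 2δ², v = δ and define α, β by the Theorem B2 recurrences. Then for all k ≥ 0: α_{3k+1} = -u, α_{3k+2}+α_{3k+3} = u, α_{9k+2} = -(2δ+4)/3, α_{9k+5} = (u+α_{3k+2})/3, α_{9k+8} = -(4δ+2)/3, β₁ = 1, β₂ = 3δ, β_{3k+4}+β_{3k+5} = 3δ, β_{9k+1} = β_{3k+1}, β_{9k+4} = -3/δ, β_{9k+7} = -3, β_{9k+3} = -δ/3, β_{9k+6} = β_{3k+3}/9, β_{9k+9} = -δ/3. -/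

import Mathlib

lemma stmt6basics (p : ℕ) [Fact p.Prime] (hgt : 3 < p)
    (δ : ZMod p) (hδ : δ^2 + δ + 1 = 0) :
    (3:ZMod p) ≠ 0 ∧ δ ≠ 0 ∧ 3*δ+3 ≠ 0 ∧ 3*δ - (-3/δ) ≠ 0 ∧ 3*δ ≠ 0 ∧ -δ/3 ≠ 0 := by
  have h3 : (3:ZMod p) ≠ 0 := by
    intro h
    have h' : ((3:ℕ) : ZMod p) = 0 := by exact_mod_cast h
    rw [ZMod.natCast_eq_zero_iff] at h'
    have := Nat.le_of_dvd (by norm_num) h'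
    omega
  have hδ0 : δ ≠ 0 := by
    intro h; rw [h] at hδ; simp at hδ
  have h33 : 3*δ+3 ≠ 0 := by
    intro h
    have h1 : δ + 1 = 0 := by
      rcases mul_eq_zero.mp (show (3:ZMod p)*(δ+1) = 0 by linear_combination h) with h'|h'
      · exact absurd h' h3
      · exact h'
    exact one_ne_zero (by linear_combination hδ - δ*h1)
  refine ⟨h3, hδ0, h33, ?_, mul_ne_zero h3 hδ0, ?_⟩
  · intro h
    have h' : 3*δ*δ + 3 = 0 := by
      have := sub_eq_zero.mp h
      field_simp at this
      linear_combination 3*this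
    have hz : -(3:ZMod p)*δ = 0 := by linear_combination h' - 3*hδ
    rcases mul_eq_zero.mp hz with h'|h'
    · exact h3 (by linear_combination -h')
    · exact hδ0 h'
  · intro h
    have : -δ = 0 := by
      rw [div_eq_zero_iff] at h
      rcases h with h|h
      · exact h
      · exact absurd h h3
    exact hδ0 (by linear_combination -this)


lemma stmt6inner (p : ℕ) [Fact p.Prime] (hgt : 3 < p)
    (δ : ZMod p) (hδ : δ^2 + δ + 1 = 0)
    (u v : ZMod p) (hu : u = 2*δ^2) (hv : v = δ)
    (α β : ℕ → ZMod p)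
    (hrβ4 : ∀ k : ℕ, β (3*k+4) = β (k+2) / (β (3*k+3) * β (3*k+2)))
    (hrβ5 : ∀ k : ℕ, β (3*k+5) = u^2 - v - β (3*k+4))
    (hrα5 : ∀ k : ℕ, α (3*k+5) = u - (α (k+2) + u*v - α (3*k+2) * β (3*k+4)) / β (3*k+5))
    (hrα6 : ∀ k : ℕ, α (3*k+6) = u - α (3*k+5))
    (hrβ6 : ∀ k : ℕ, β (3*k+6) = v - α (3*k+5) * α (3*k+6))
    (k : ℕ)
    (i2 : β (9*k+2) = β (3*k+2)) (i2' : β (3*k+2) ≠ 0)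
    (i3 : β (9*k+3) = -δ/3)
    (iα2 : α (9*k+2) = -(2*δ+4)/3)
    (i15 : α (3*k+3) = u - α (3*k+2))
    (i16 : β (3*k+3) = v - α (3*k+2) * α (3*k+3))
    (i14 : β (3*k+3) ≠ 0) :
    α (9*k+5) = (u + α (3*k+2))/3 ∧ α (9*k+8) = -(4*δ+2)/3 ∧
    β (9*k+4) = -3/δ ∧ β (9*k+6) = β (3*k+3)/9 ∧ β (9*k+7) = -3 ∧ β (9*k+9) = -δ/3 := by
  obtain ⟨h3, hδ0, h33, -, -, hd3⟩ := stmt6basics p hgt δ hδ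
  have hd3' : (-δ/3 : ZMod p) ≠ 0 := hd3
  have h9ne : (9 : ZMod p) ≠ 0 := by
    have : (9 : ZMod p) = 3*3 := by norm_num
    rw [this]; exact mul_ne_zero h3 h3
  -- β (9k+4)
  have h8 : β (9*k+4) = -3/δ := by
    have H := hrβ4 (3*k)
    rw [show 3*(3*k)+4 = 9*k+4 from by ring, show 3*(3*k)+3 = 9*k+3 from by ring,
        show 3*(3*k)+2 = 9*k+2 from by ring] at H
    rw [H, i3, i2]
    rw [div_eq_div_iff (mul_ne_zero hd3' i2') hδ0]
    field_simp
  -- β (9k+5)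
  have h5v : β (9*k+5) = -3 := by
    have H := hrβ5 (3*k)
    rw [show 3*(3*k)+5 = 9*k+5 from by ring, show 3*(3*k)+4 = 9*k+4 from by ring] at H
    rw [H, h8, hu, hv]
    field_simp
    linear_combination (4*δ^3 - 4*δ^2 + 3)*hδ
  -- α (9k+5)
  have h4 : α (9*k+5) = (u + α (3*k+2))/3 := by
    have H := hrα5 (3*k)
    rw [show 3*(3*k)+5 = 9*k+5 from by ring, show 3*(3*k)+4 = 9*k+4 from by ring,
        show 3*(3*k)+2 = 9*k+2 from by ring] at H
    rw [H, iα2, h8, h5v, hu, hv]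
    field_simp
    linear_combination (-4 + 2*δ + 2*δ^2)*hδ
  -- α (9k+6)
  have h6a : α (9*k+6) = u - α (9*k+5) := by
    have H := hrα6 (3*k)
    rw [show 3*(3*k)+6 = 9*k+6 from by ring, show 3*(3*k)+5 = 9*k+5 from by ring] at H
    exact H
  -- β (9k+6)
  have h11 : β (9*k+6) = β (3*k+3)/9 := by
    have H := hrβ6 (3*k)
    rw [show 3*(3*k)+6 = 9*k+6 from by ring, show 3*(3*k)+5 = 9*k+5 from by ring] at H
    rw [H, h6a, h4, i16, i15, hu, hv]
    field_simp [h9ne]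
    linear_combination (72*δ - 72*δ^2)*hδ
  -- β (9k+7)
  have h9 : β (9*k+7) = -3 := by
    have H := hrβ4 (3*k+1)
    rw [show 3*(3*k+1)+4 = 9*k+7 from by ring, show 3*(3*k+1)+3 = 9*k+6 from by ring,
        show 3*(3*k+1)+2 = 9*k+5 from by ring, show 3*k+1+2 = 3*k+3 from by ring] at H
    rw [H, h11, h5v]
    field_simp
    ring
  -- β (9k+8)
  have h8v : β (9*k+8) = 3*δ+3 := by
    have H := hrβ5 (3*k+1)
    rw [show 3*(3*k+1)+5 = 9*k+8 from by ring, show 3*(3*k+1)+4 = 9*k+7 from by ring] at H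
    rw [H, h9, hu, hv]
    linear_combination (4*δ^2 - 4*δ)*hδ
  -- α (9k+8)
  have h5 : α (9*k+8) = -(4*δ+2)/3 := by
    have H := hrα5 (3*k+1)
    rw [show 3*(3*k+1)+5 = 9*k+8 from by ring, show 3*(3*k+1)+4 = 9*k+7 from by ring,
        show 3*(3*k+1)+2 = 9*k+5 from by ring, show 3*k+1+2 = 3*k+3 from by ring] at H
    rw [H, i15, h4, h9, h8v, hu, hv]
    field_simp [h33, (show (1:ZMod p)+δ ≠ 0 from fun h => h33 (by linear_combination 3*h)), (show δ+(1:ZMod p) ≠ 0 from fun h => h33 (by linear_combination 3*h))]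
    linear_combination (2 + 4*δ)*hδ
  -- α (9k+9)
  have h9a : α (9*k+9) = u - α (9*k+8) := by
    have H := hrα6 (3*k+1)
    rw [show 3*(3*k+1)+6 = 9*k+9 from by ring, show 3*(3*k+1)+5 = 9*k+8 from by ring] at H
    exact H
  -- β (9k+9)
  have h12 : β (9*k+9) = -δ/3 := by
    have H := hrβ6 (3*k+1)
    rw [show 3*(3*k+1)+6 = 9*k+9 from by ring, show 3*(3*k+1)+5 = 9*k+8 from by ring] at H
    rw [H, h9a, h5, hu, hv]
    field_simp
    linear_combination (4 + 24*δ)*hδ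
  exact ⟨h4, h5, h8, h11, h9, h12⟩

def stmt6Q (p : ℕ) [Fact p.Prime] (δ u v : ZMod p) (α β : ℕ → ZMod p) (k : ℕ) : Prop :=
  α (3*k+1) = -u ∧
  α (3*k+3) = u - α (3*k+2) ∧
  β (3*k+3) = v - α (3*k+2) * α (3*k+3) ∧
  β (3*k+3) ≠ 0 ∧
  ((k = 0 ∧ β (3*k+1) = 1) ∨ β (3*k+1) = -3/δ ∨ β (3*k+1) = (-3 : ZMod p)) ∧
  α (9*k+2) = -(2*δ+4)/(3 : ZMod p) ∧
  α (9*k+5) = (u + α (3*k+2))/(3 : ZMod p) ∧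
  α (9*k+8) = -(4*δ+2)/(3 : ZMod p) ∧
  β (9*k+1) = β (3*k+1) ∧
  β (9*k+3) = -δ/(3 : ZMod p) ∧
  β (9*k+4) = -3/δ ∧
  β (9*k+6) = β (3*k+3)/(9 : ZMod p) ∧
  β (9*k+7) = (-3 : ZMod p) ∧
  β (9*k+9) = -δ/(3 : ZMod p)

theorem stmt6aux (p : ℕ) [Fact p.Prime] (hgt : 3 < p)
    (δ : ZMod p) (hδ : δ^2 + δ + 1 = 0)
    (u v : ZMod p) (hu : u = 2*δ^2) (hv : v = δ)
    (α β : ℕ → ZMod p)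
    (hα1 : α 1 = -u) (hα2 : α 2 = u * (2*v - 1 - u^2) / (v - u^2))
    (hα3 : α 3 = -u * (v - 1) / (v - u^2))
    (hβ1 : β 1 = 1) (hβ2 : β 2 = u^2 - v)
    (hβ3 : β 3 = (u^2 + u^4 + v^3 - 3*u^2*v) / (v - u^2)^2)
    (hrα4 : ∀ k : ℕ, α (3*k+4) = -u)
    (hrβ4 : ∀ k : ℕ, β (3*k+4) = β (k+2) / (β (3*k+3) * β (3*k+2)))
    (hrβ5 : ∀ k : ℕ, β (3*k+5) = u^2 - v - β (3*k+4))
    (hrα5 : ∀ k : ℕ, α (3*k+5) = u - (α (k+2) + u*v - α (3*k+2) * β (3*k+4)) / β (3*k+5))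
    (hrα6 : ∀ k : ℕ, α (3*k+6) = u - α (3*k+5))
    (hrβ6 : ∀ k : ℕ, β (3*k+6) = v - α (3*k+5) * α (3*k+6)) :
    ∀ k : ℕ, stmt6Q p δ u v α β k := by
  obtain ⟨h3, hδ0, h33, h3d, h3δ, hd3⟩ := stmt6basics p hgt δ hδ
  have h9ne : (9 : ZMod p) ≠ 0 := by
    have h : (9 : ZMod p) = 3*3 := by norm_num
    rw [h]; exact mul_ne_zero h3 h3
  have hn3δ : -(3*δ) ≠ 0 := by
    intro h; exact h3δ (by linear_combination -h)
  have hvu : v - u^2 = -(3*δ) := by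
    rw [hu, hv]; linear_combination (4*δ - 4*δ^2)*hδ
  have hb2v : β 2 = 3*δ := by
    rw [hβ2, hu, hv]; linear_combination (4*δ^2 - 4*δ)*hδ
  have ha2v : α 2 = -(2*δ+4)/3 := by
    rw [hα2, hvu, hu, hv, div_eq_div_iff hn3δ h3]
    linear_combination (-12*δ + 24*δ^3 - 24*δ^4)*hδ
  have ha3v : α 3 = -(4*δ+2)/3 := by
    rw [hα3, hvu, hu, hv, div_eq_div_iff hn3δ h3]
    linear_combination (-6*δ)*hδ
  have hb3v : β 3 = -δ/3 := by
    rw [hβ3, hvu, hu, hv, div_eq_div_iff (pow_ne_zero 2 hn3δ) h3]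
    linear_combination (12*δ^3 - 48*δ^5 + 48*δ^6)*hδ
  have h15z : α 3 = u - α 2 := by
    rw [ha3v, ha2v, hu]; field_simp; linear_combination (-6)*hδ
  have h16z : β 3 = v - α 2 * α 3 := by
    rw [hb3v, ha2v, ha3v, hv]; field_simp; linear_combination 8*hδ
  have hone : (-δ/3) * (3*δ+3) = 1 := by
    field_simp; linear_combination (-1)*hδ
  intro k
  induction k using Nat.strong_induction_on with
  | _ k ih =>
    match k, ih with
    | 0, ih =>
      have i2 : β (9*0+2) = β (3*0+2) := by norm_num
      have i2' : β (3*0+2) ≠ 0 := by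
        show β 2 ≠ 0
        rw [hb2v]; exact h3δ
      have i3 : β (9*0+3) = -δ/3 := by show β 3 = -δ/3; exact hb3v
      have iα2 : α (9*0+2) = -(2*δ+4)/3 := by show α 2 = _; exact ha2v
      have i15 : α (3*0+3) = u - α (3*0+2) := h15z
      have i16 : β (3*0+3) = v - α (3*0+2) * α (3*0+2+1) := h16z
      have i14 : β (3*0+3) ≠ 0 := by
        show β 3 ≠ 0
        rw [hb3v]; exact hd3
      obtain ⟨w4, w5, w8, w11, w9, w12⟩ :=
        stmt6inner p hgt δ hδ u v hu hv α β hrβ4 hrβ5 hrα5 hrα6 hrβ6 0 i2 i2' i3 iα2 i15 i16 i14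
      exact ⟨hα1, h15z, h16z, i14, Or.inl ⟨rfl, hβ1⟩, iα2, w4, w5, rfl, i3, w8, w11, w9, w12⟩
    | (j+1), ih =>
      obtain ⟨j1, j15, j16, j14, j13, jα2, jα5, jα8, jβ1, jβ3, jβ4, jβ6, jβ7, jβ9⟩ :=
        ih j (by omega)
      have e8 : β (9*j+8) = 3*δ+3 := by
        have H := hrβ5 (3*j+1)
        rw [show 3*(3*j+1)+5 = 9*j+8 from by ring, show 3*(3*j+1)+4 = 9*j+7 from by ring] at H
        rw [H, jβ7, hu, hv]; linear_combination (4*δ^2-4*δ)*hδ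
      have h7' : β (9*j+10) = β (3*j+4) := by
        have H := hrβ4 (3*j+2)
        rw [show 3*(3*j+2)+4 = 9*j+10 from by ring, show 3*(3*j+2)+3 = 9*j+9 from by ring,
            show 3*(3*j+2)+2 = 9*j+8 from by ring, show 3*j+2+2 = 3*j+4 from by ring] at H
        rw [H, jβ9, e8, hone, div_one]
      obtain ⟨q1, q15, q16, q14, q13, qα2, qα5, qα8, qβ1, qβ3, qβ4, qβ6, qβ7, qβ9⟩ :=
        ih ((j+1)/3) (Nat.div_lt_self (by omega) (by norm_num))
      have hr : (j+1)%3 = 0 ∨ (j+1)%3 = 1 ∨ (j+1)%3 = 2 := by omega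
      have hqq := Nat.div_add_mod (j+1) 3
      have h13 : β (3*j+4) = -3/δ ∨ β (3*j+4) = (-3 : ZMod p) := by
        rcases hr with h|h|h
        · rw [show 3*j+4 = 9*((j+1)/3)+1 from by omega, qβ1]
          rcases q13 with ⟨hq0, _⟩|h'|h'
          · exfalso; omega
          · exact Or.inl h'
          · exact Or.inr h'
        · rw [show 3*j+4 = 9*((j+1)/3)+4 from by omega]; exact Or.inl qβ4
        · rw [show 3*j+4 = 9*((j+1)/3)+7 from by omega]; exact Or.inr qβ7
      have h14' : β (3*j+6) ≠ 0 := by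
        rcases hr with h|h|h
        · rw [show 3*j+6 = 9*((j+1)/3)+3 from by omega, qβ3]; exact hd3
        · rw [show 3*j+6 = 9*((j+1)/3)+6 from by omega, qβ6]; exact div_ne_zero q14 h9ne
        · rw [show 3*j+6 = 9*((j+1)/3)+9 from by omega, qβ9]; exact hd3
      have hb5 : β (3*j+5) = 3*δ - β (3*j+4) := by
        rw [hrβ5 j, hu, hv]; linear_combination (4*δ^2-4*δ)*hδ
      have hb5ne : β (3*j+5) ≠ 0 := by
        rw [hb5]; rcases h13 with h|h
        · rw [h]; exact h3d
        · rw [h]; intro hh; exact h33 (by linear_combination hh)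
      have i2' : β (9*j+11) = β (3*j+5) := by
        have H := hrβ5 (3*j+2)
        rw [show 3*(3*j+2)+5 = 9*j+11 from by ring, show 3*(3*j+2)+4 = 9*j+10 from by ring] at H
        rw [H, h7', hb5, hu, hv]; linear_combination (4*δ^2-4*δ)*hδ
      have i2ne : β (9*j+11) ≠ 0 := by rw [i2']; exact hb5ne
      have iα2' : α (9*j+11) = -(2*δ+4)/3 := by
        have H := hrα5 (3*j+2)
        rw [show 3*(3*j+2)+5 = 9*j+11 from by ring, show 3*(3*j+2)+4 = 9*j+10 from by ring,
            show 3*(3*j+2)+2 = 9*j+8 from by ring, show 3*j+2+2 = 3*j+4 from by ring] at H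
        have hnum : α (3*j+4) + u*v - α (9*j+8) * β (9*j+10) = (u + (2*δ+4)/3) * β (9*j+11) := by
          rw [hrα4 j, jα8, h7', i2', hb5, hu, hv]
          field_simp
          linear_combination (6*β (3*j+4) - 12*δ)*hδ
        rw [H, hnum, mul_div_assoc, div_self i2ne, mul_one]; ring
      have i3' : β (9*j+12) = -δ/3 := by
        have H := hrβ6 (3*j+2)
        have H6 := hrα6 (3*j+2)
        rw [show 3*(3*j+2)+6 = 9*j+12 from by ring, show 3*(3*j+2)+5 = 9*j+11 from by ring] at H H6
        rw [H, H6, iα2', hu, hv]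
        field_simp
        linear_combination (16 + 12*δ)*hδ
      have i15' : α (3*j+6) = u - α (3*j+5) := hrα6 j
      have i16' : β (3*j+6) = v - α (3*j+5) * α (3*j+6) := hrβ6 j
      obtain ⟨w4, w5, w8, w11, w9, w12⟩ :=
        stmt6inner p hgt δ hδ u v hu hv α β hrβ4 hrβ5 hrα5 hrα6 hrβ6 (j+1)
        (by rw [show 9*(j+1)+2 = 9*j+11 from by ring, show 3*(j+1)+2 = 3*j+5 from by ring]; exact i2')
        (by rw [show 3*(j+1)+2 = 3*j+5 from by ring]; exact hb5ne)
        (by rw [show 9*(j+1)+3 = 9*j+12 from by ring]; exact i3')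
        (by rw [show 9*(j+1)+2 = 9*j+11 from by ring]; exact iα2')
        (by rw [show 3*(j+1)+3 = 3*j+6 from by ring, show 3*(j+1)+2 = 3*j+5 from by ring]; exact i15')
        (by rw [show 3*(j+1)+3 = 3*j+6 from by ring, show 3*(j+1)+2 = 3*j+5 from by ring]; exact i16')
        (by rw [show 3*(j+1)+3 = 3*j+6 from by ring]; exact h14')
      refine ⟨?_, ?_, ?_, ?_, ?_, ?_, w4, w5, ?_, ?_, w8, w11, w9, w12⟩
      · rw [show 3*(j+1)+1 = 3*j+4 from by ring]; exact hrα4 j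
      · rw [show 3*(j+1)+3 = 3*j+6 from by ring, show 3*(j+1)+2 = 3*j+5 from by ring]; exact i15'
      · rw [show 3*(j+1)+3 = 3*j+6 from by ring, show 3*(j+1)+2 = 3*j+5 from by ring]; exact i16'
      · rw [show 3*(j+1)+3 = 3*j+6 from by ring]; exact h14'
      · rw [show 3*(j+1)+1 = 3*j+4 from by ring]; exact Or.inr h13
      · rw [show 9*(j+1)+2 = 9*j+11 from by ring]; exact iα2'
      · rw [show 9*(j+1)+1 = 9*j+10 from by ring, show 3*(j+1)+1 = 3*j+4 from by ring]; exact h7'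
      · rw [show 9*(j+1)+3 = 9*j+12 from by ring]; exact i3'




theorem stmt6 (p : ℕ) [Fact p.Prime] (hgt : 3 < p)
    (δ : ZMod p) (hδ : δ^2 + δ + 1 = 0)
    (u v : ZMod p) (hu : u = 2*δ^2) (hv : v = δ)
    (α β : ℕ → ZMod p)
    (hα1 : α 1 = -u) (hα2 : α 2 = u * (2*v - 1 - u^2) / (v - u^2))
    (hα3 : α 3 = -u * (v - 1) / (v - u^2))
    (hβ1 : β 1 = 1) (hβ2 : β 2 = u^2 - v)
    (hβ3 : β 3 = (u^2 + u^4 + v^3 - 3*u^2*v) / (v - u^2)^2)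
    (hrα4 : ∀ k : ℕ, α (3*k+4) = -u)
    (hrβ4 : ∀ k : ℕ, β (3*k+4) = β (k+2) / (β (3*k+3) * β (3*k+2)))
    (hrβ5 : ∀ k : ℕ, β (3*k+5) = u^2 - v - β (3*k+4))
    (hrα5 : ∀ k : ℕ, α (3*k+5) = u - (α (k+2) + u*v - α (3*k+2) * β (3*k+4)) / β (3*k+5))
    (hrα6 : ∀ k : ℕ, α (3*k+6) = u - α (3*k+5))
    (hrβ6 : ∀ k : ℕ, β (3*k+6) = v - α (3*k+5) * α (3*k+6)) :
    (∀ k : ℕ, α (3*k+1) = -u ∧ α (3*k+2) + α (3*k+3) = u ∧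
      α (9*k+2) = -(2*δ+4)/3 ∧ α (9*k+5) = (u + α (3*k+2))/3 ∧
      α (9*k+8) = -(4*δ+2)/3) ∧
    β 1 = 1 ∧ β 2 = 3*δ ∧
    (∀ k : ℕ, β (3*k+4) + β (3*k+5) = 3*δ ∧
      β (9*k+1) = β (3*k+1) ∧ β (9*k+4) = -3/δ ∧ β (9*k+7) = -3 ∧
      β (9*k+3) = -δ/3 ∧ β (9*k+6) = β (3*k+3)/9 ∧ β (9*k+9) = -δ/3) := by
  have main := stmt6aux p hgt δ hδ u v hu hv α β hα1 hα2 hα3 hβ1 hβ2 hβ3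
    hrα4 hrβ4 hrβ5 hrα5 hrα6 hrβ6
  refine ⟨?_, hβ1, ?_, ?_⟩
  · intro k
    obtain ⟨c1, c15, c16, c14, c13, cα2, cα5, cα8, cβ1, cβ3, cβ4, cβ6, cβ7, cβ9⟩ := main k
    exact ⟨c1, by linear_combination c15, cα2, cα5, cα8⟩
  · rw [hβ2, hu, hv]; linear_combination (4*δ^2-4*δ)*hδ
  · intro k
    obtain ⟨c1, c15, c16, c14, c13, cα2, cα5, cα8, cβ1, cβ3, cβ4, cβ6, cβ7, cβ9⟩ := main k
    refine ⟨?_, cβ1, cβ4, cβ7, cβ3, cβ6, cβ9⟩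
    rw [hrβ5 k, hu, hv]; linear_combination (4*δ^2-4*δ)*hδ
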